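/- If a bipartite state |Ψ⟩ ∈ ℂ²⊗ℂ² with real nonnegative Schmidt-like success value achieves S = p − q > 0 in Cabello's test with projective measurements, then |Ψ⟩ is entangled (not a product state). -/

import Mathlib

open Complex
open Matrix

lemma parseval2 (c0 c1 d0 d1 : ℂ)
    (h1 : (starRingEnd ℂ) c0 * c0 + (starRingEnd ℂ) c1 * c1 = 1)
    (h2 : (starRingEnd ℂ) d0 * d0 + (starRingEnd ℂ) d1 * d1 = 1)
    (h3 : (starRingEnd ℂ) c0 * d0 + (starRingEnd ℂ) c1 * d1 = 0)
    (x y : ℂ) :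
    Complex.normSq ((starRingEnd ℂ) x * c0 + (starRingEnd ℂ) y * c1)
      + Complex.normSq ((starRingEnd ℂ) x * d0 + (starRingEnd ℂ) y * d1)
      = Complex.normSq x + Complex.normSq y := by
  have h3' : (starRingEnd ℂ) d0 * c0 + (starRingEnd ℂ) d1 * c1 = 0 := by
    have := congrArg (starRingEnd ℂ) h3
    simpa [mul_comm] using this
  set M : Matrix (Fin 2) (Fin 2) ℂ := !![c0, d0; c1, d1] with hMdef
  have hM : Mᴴ * M = 1 := by
    ext i j
    fin_cases i <;> fin_cases j <;>
      simp [hMdef, Matrix.mul_apply, Fin.sum_univ_two, Matrix.conjTranspose_apply,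
        Matrix.one_apply, h1, h2, h3, h3']
  have hM' : M * Mᴴ = 1 := mul_eq_one_comm.mp hM
  have r00 : c0 * (starRingEnd ℂ) c0 + d0 * (starRingEnd ℂ) d0 = 1 := by
    have := congrFun (congrFun hM' 0) 0
    simpa [hMdef, Matrix.mul_apply, Fin.sum_univ_two, Matrix.conjTranspose_apply,
      Matrix.one_apply] using this
  have r11 : c1 * (starRingEnd ℂ) c1 + d1 * (starRingEnd ℂ) d1 = 1 := by
    have := congrFun (congrFun hM' 1) 1
    simpa [hMdef, Matrix.mul_apply, Fin.sum_univ_two, Matrix.conjTranspose_apply,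
      Matrix.one_apply] using this
  have r01 : c0 * (starRingEnd ℂ) c1 + d0 * (starRingEnd ℂ) d1 = 0 := by
    have := congrFun (congrFun hM' 0) 1
    simpa [hMdef, Matrix.mul_apply, Fin.sum_univ_two, Matrix.conjTranspose_apply,
      Matrix.one_apply] using this
  have r10 : c1 * (starRingEnd ℂ) c0 + d1 * (starRingEnd ℂ) d0 = 0 := by
    have := congrFun (congrFun hM' 1) 0
    simpa [hMdef, Matrix.mul_apply, Fin.sum_univ_two, Matrix.conjTranspose_apply,
      Matrix.one_apply] using this
  have key2 : (Complex.normSq ((starRingEnd ℂ) x * c0 + (starRingEnd ℂ) y * c1)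
      + Complex.normSq ((starRingEnd ℂ) x * d0 + (starRingEnd ℂ) y * d1) : ℂ)
      = Complex.normSq x + Complex.normSq y := by
    rw [← Complex.mul_conj, ← Complex.mul_conj, ← Complex.mul_conj, ← Complex.mul_conj]
    simp only [map_add, _root_.map_mul, Complex.conj_conj]
    linear_combination ((starRingEnd ℂ) x * x) * r00 + ((starRingEnd ℂ) y * y) * r11
      + ((starRingEnd ℂ) x * y) * r01 + ((starRingEnd ℂ) y * x) * r10
  exact_mod_cast key2

/-- Any two-qubit state passing Cabello's test (i.e., satisfying both zero
constraints and `p > q` for some projective measurements) is entangled. -/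
theorem cabello_success_implies_entangled
    (Ψ : Matrix (Fin 2) (Fin 2) ℂ)
    (hnorm : ∑ i, ∑ j, ‖(Ψ i j)‖ ^ 2 = 1)
    (u0 u0' u1 u1' v0 v0' v1 v1' : Fin 2 → ℂ)
    -- each measurement is given by an orthonormal basis (+ and − eigenvectors)
    (hu0 : ∑ i, ‖(u0 i)‖ ^ 2 = 1) (hu0' : ∑ i, ‖(u0' i)‖ ^ 2 = 1)
    (hu0orth : ∑ i, (starRingEnd ℂ) (u0 i) * u0' i = 0)
    (hu1 : ∑ i, ‖(u1 i)‖ ^ 2 = 1) (hu1' : ∑ i, ‖(u1' i)‖ ^ 2 = 1)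
    (hu1orth : ∑ i, (starRingEnd ℂ) (u1 i) * u1' i = 0)
    (hv0 : ∑ i, ‖(v0 i)‖ ^ 2 = 1) (hv0' : ∑ i, ‖(v0' i)‖ ^ 2 = 1)
    (hv0orth : ∑ i, (starRingEnd ℂ) (v0 i) * v0' i = 0)
    (hv1 : ∑ i, ‖(v1 i)‖ ^ 2 = 1) (hv1' : ∑ i, ‖(v1' i)‖ ^ 2 = 1)
    (hv1orth : ∑ i, (starRingEnd ℂ) (v1 i) * v1' i = 0)
    -- the Cabello zero constraints  P(+,-|A₁,B₀) = 0  and  P(-,+|A₀,B₁) = 0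
    (hz1 : ‖(∑ i, ∑ j, (starRingEnd ℂ) (Ψ i j) * (u1 i * v0' j))‖ ^ 2 = 0)
    (hz2 : ‖(∑ i, ∑ j, (starRingEnd ℂ) (Ψ i j) * (u0' i * v1 j))‖ ^ 2 = 0)
    -- success  p > q
    (hpq : ‖(∑ i, ∑ j, (starRingEnd ℂ) (Ψ i j) * (u0 i * v0 j))‖ ^ 2
         < ‖(∑ i, ∑ j, (starRingEnd ℂ) (Ψ i j) * (u1 i * v1 j))‖ ^ 2) :
    ¬ ∃ (ψA ψB : Fin 2 → ℂ), ∀ i j, Ψ i j = ψA i * ψB j := by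
  rintro ⟨a, b, hab⟩
  have cms : ∀ z : ℂ, (starRingEnd ℂ) z * z = ((‖z‖ ^ 2 : ℝ) : ℂ) := by
    intro z
    rw [mul_comm, Complex.mul_conj, Complex.sq_norm]
  -- complex forms of the normalizations
  have toC : ∀ u : Fin 2 → ℂ, (∑ i, ‖(u i)‖ ^ 2 = 1) →
      (starRingEnd ℂ) (u 0) * u 0 + (starRingEnd ℂ) (u 1) * u 1 = 1 := by
    intro u hu
    rw [Fin.sum_univ_two] at hu
    rw [cms, cms, ← Complex.ofReal_add, hu, Complex.ofReal_one]
  -- the factorized amplitudes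
  set A0 : ℂ := (starRingEnd ℂ) (a 0) * u0 0 + (starRingEnd ℂ) (a 1) * u0 1 with hA0
  set A0' : ℂ := (starRingEnd ℂ) (a 0) * u0' 0 + (starRingEnd ℂ) (a 1) * u0' 1 with hA0'
  set A1 : ℂ := (starRingEnd ℂ) (a 0) * u1 0 + (starRingEnd ℂ) (a 1) * u1 1 with hA1
  set A1' : ℂ := (starRingEnd ℂ) (a 0) * u1' 0 + (starRingEnd ℂ) (a 1) * u1' 1 with hA1'
  set B0 : ℂ := (starRingEnd ℂ) (b 0) * v0 0 + (starRingEnd ℂ) (b 1) * v0 1 with hB0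
  set B0' : ℂ := (starRingEnd ℂ) (b 0) * v0' 0 + (starRingEnd ℂ) (b 1) * v0' 1 with hB0'
  set B1 : ℂ := (starRingEnd ℂ) (b 0) * v1 0 + (starRingEnd ℂ) (b 1) * v1 1 with hB1
  set B1' : ℂ := (starRingEnd ℂ) (b 0) * v1' 0 + (starRingEnd ℂ) (b 1) * v1' 1 with hB1'
  have hfac : ∀ u v : Fin 2 → ℂ,
      (∑ i, ∑ j, (starRingEnd ℂ) (Ψ i j) * (u i * v j))
      = ((starRingEnd ℂ) (a 0) * u 0 + (starRingEnd ℂ) (a 1) * u 1)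
        * ((starRingEnd ℂ) (b 0) * v 0 + (starRingEnd ℂ) (b 1) * v 1) := by
    intro u v
    simp only [Fin.sum_univ_two, hab, _root_.map_mul]
    ring
  -- the zero constraints factorize
  have hz1' : A1 * B0' = 0 := by
    have := hz1
    rw [hfac u1 v0'] at this
    have h := pow_eq_zero_iff (n := 2) (by norm_num) |>.mp this
    exact norm_eq_zero.mp h
  have hz2' : A0' * B1 = 0 := by
    have := hz2
    rw [hfac u0' v1] at this
    have h := pow_eq_zero_iff (n := 2) (by norm_num) |>.mp this
    exact norm_eq_zero.mp h
  -- p and q factorize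
  have hpq' : Complex.normSq A0 * Complex.normSq B0
      < Complex.normSq A1 * Complex.normSq B1 := by
    rw [hfac u0 v0, hfac u1 v1] at hpq
    simpa [norm_mul, mul_pow, Complex.sq_norm] using hpq
  -- success forces A1 ≠ 0 and B1 ≠ 0
  have hprodpos : 0 < Complex.normSq A1 * Complex.normSq B1 :=
    lt_of_le_of_lt (mul_nonneg (Complex.normSq_nonneg _) (Complex.normSq_nonneg _)) hpq'
  have hA1ne : A1 ≠ 0 := by
    intro h
    rw [h] at hprodpos
    simp at hprodpos
  have hB1ne : B1 ≠ 0 := by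
    intro h
    rw [h] at hprodpos
    simp at hprodpos
  have hB0'0 : B0' = 0 := by
    rcases mul_eq_zero.mp hz1' with h | h
    · exact absurd h hA1ne
    · exact h
  have hA0'0 : A0' = 0 := by
    rcases mul_eq_zero.mp hz2' with h | h
    · exact h
    · exact absurd h hB1ne
  -- Parseval on both sides, both bases
  have pa0 := parseval2 (u0 0) (u0 1) (u0' 0) (u0' 1) (toC u0 hu0) (toC u0' hu0')
    (by simpa [Fin.sum_univ_two] using hu0orth) (a 0) (a 1)
  have pa1 := parseval2 (u1 0) (u1 1) (u1' 0) (u1' 1) (toC u1 hu1) (toC u1' hu1')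
    (by simpa [Fin.sum_univ_two] using hu1orth) (a 0) (a 1)
  have pb0 := parseval2 (v0 0) (v0 1) (v0' 0) (v0' 1) (toC v0 hv0) (toC v0' hv0')
    (by simpa [Fin.sum_univ_two] using hv0orth) (b 0) (b 1)
  have pb1 := parseval2 (v1 0) (v1 1) (v1' 0) (v1' 1) (toC v1 hv1) (toC v1' hv1')
    (by simpa [Fin.sum_univ_two] using hv1orth) (b 0) (b 1)
  rw [← hA0, ← hA0', hA0'0] at pa0
  rw [← hA1, ← hA1'] at pa1
  rw [← hB0, ← hB0', hB0'0] at pb0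
  rw [← hB1, ← hB1'] at pb1
  simp only [Complex.normSq_zero, add_zero] at pa0 pb0
  have hA1le : Complex.normSq A1 ≤ Complex.normSq A0 := by
    nlinarith [Complex.normSq_nonneg A1']
  have hB1le : Complex.normSq B1 ≤ Complex.normSq B0 := by
    nlinarith [Complex.normSq_nonneg B1']
  have : Complex.normSq A1 * Complex.normSq B1 ≤ Complex.normSq A0 * Complex.normSq B0 :=
    mul_le_mul hA1le hB1le (Complex.normSq_nonneg _) (Complex.normSq_nonneg _)
  linarith
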